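/- Let λ, μR, μL, μU > 0. Let X, Y₁, Y₂, Z be independent Poisson random variables with parameters λ/(μR+μU), λμU/(μR(μR+μU)), λμR/(μU(μR+μU)), λ/μL respectively. Then the distribution of (X+Y₁, Z, X+Y₂) on ℕ³ is invariant for the continuous-time Markov chain on ℕ³ with transitions x → x + e_R + e_U − e_L at rate μL·x_L, x → x − e_R at rate μR·x_R, x → x − e_U at rate μU·x_U, and x → x + e_L at rate λ. -/

import Mathlib

open Real

/-- The Poisson distribution with parameter `a`. -/
noncomputable def poissonP (a : ℝ) (x : ℕ) : ℝ := exp (-a) * a ^ x / (Nat.factorial x)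

lemma pois_succ (a : ℝ) (n : ℕ) : ((n:ℝ)+1) * poissonP a (n+1) = a * poissonP a n := by
  have h : ((Nat.factorial n : ℝ)) ≠ 0 := Nat.cast_ne_zero.2 (Nat.factorial_ne_zero n)
  simp only [poissonP, Nat.factorial_succ, pow_succ, Nat.cast_mul]
  field_simp
  push_cast
  ring

noncomputable def Fc (a b c : ℝ) (r u : ℕ) : ℝ :=
  ∑ k ∈ Finset.range (min r u + 1), poissonP a k * poissonP b (r - k) * poissonP c (u - k)

lemma Fc_symm (a b c : ℝ) (r u : ℕ) : Fc a b c r u = Fc a c b u r := by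
  simp only [Fc, min_comm u r]
  exact Finset.sum_congr rfl fun k _ => by ring

lemma Fc_key (a b c : ℝ) (r u : ℕ) :
    ((r:ℝ)+1) * Fc a b c (r+1) u
      = a * (if u = 0 then 0 else Fc a b c r (u-1)) + b * Fc a b c r u := by
  have hterm : ∀ v k : ℕ, k ≤ r →
      ((r+1-k:ℕ):ℝ) * (poissonP a k * poissonP b (r+1-k) * poissonP c v)
      = b * (poissonP a k * poissonP b (r-k) * poissonP c v) := by
    intro v k hk
    have h1 : r+1-k = (r-k)+1 := by omega
    rw [h1, Nat.cast_add, Nat.cast_one]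
    linear_combination (poissonP a k * poissonP c v) * pois_succ b (r-k)
  cases u with
  | zero =>
      simp only [Fc, Nat.min_zero, zero_add, if_pos rfl, Finset.range_one,
        Finset.sum_singleton, Nat.sub_zero, Nat.sub_self, mul_zero, if_true, eq_self_iff_true]
      linear_combination (poissonP a 0 * poissonP c 0) * pois_succ b r
  | succ v =>
      have hmin : min (r+1) (v+1) = min r v + 1 := by omega
      have hS1 : ∑ k ∈ Finset.range (min r v + 1 + 1),
          (k:ℝ) * (poissonP a k * poissonP b (r+1-k) * poissonP c (v+1-k))
          = a * Fc a b c r v := by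
        rw [Finset.sum_range_succ']
        simp only [Nat.cast_zero, zero_mul, add_zero, Nat.add_sub_add_right]
        rw [Fc, Finset.mul_sum]
        refine Finset.sum_congr rfl fun i _ => ?_
        push_cast
        linear_combination (poissonP b (r-i) * poissonP c (v-i)) * pois_succ a i
      have hS2 : ∑ k ∈ Finset.range (min r v + 1 + 1),
          ((r+1-k:ℕ):ℝ) * (poissonP a k * poissonP b (r+1-k) * poissonP c (v+1-k))
          = b * Fc a b c r (v+1) := by
        rw [Fc, Finset.mul_sum]
        rcases le_or_gt r v with h | h
        · rw [min_eq_left h, min_eq_left (by omega : r ≤ v+1), Finset.sum_range_succ]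
          simp only [Nat.sub_self, Nat.cast_zero, zero_mul, add_zero]
          exact Finset.sum_congr rfl fun k hk =>
            hterm _ _ (by have := Finset.mem_range.mp hk; omega)
        · rw [min_eq_right (le_of_lt h), min_eq_right (by omega : v+1 ≤ r)]
          exact Finset.sum_congr rfl fun k hk =>
            hterm _ _ (by have := Finset.mem_range.mp hk; omega)
      have expand : ((r:ℝ)+1) * Fc a b c (r+1) (v+1)
          = (∑ k ∈ Finset.range (min r v + 1 + 1),
              (k:ℝ) * (poissonP a k * poissonP b (r+1-k) * poissonP c (v+1-k)))
            + (∑ k ∈ Finset.range (min r v + 1 + 1),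
              ((r+1-k:ℕ):ℝ) * (poissonP a k * poissonP b (r+1-k) * poissonP c (v+1-k))) := by
        rw [Fc, hmin, Finset.mul_sum, ← Finset.sum_add_distrib]
        refine Finset.sum_congr rfl fun k hk => ?_
        have hk' := Finset.mem_range.mp hk
        have h2 : (k + (r+1-k) : ℕ) = r+1 := by omega
        have h3 : ((r:ℝ)+1) = (k:ℝ) + ((r+1-k:ℕ):ℝ) := by
          rw [← Nat.cast_add, h2]; push_cast; ring
        rw [h3]; ring
      rw [expand, hS1, hS2, if_neg (Nat.succ_ne_zero v), Nat.add_sub_cancel]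

lemma Fc_key' (a b c : ℝ) (r u : ℕ) :
    ((u:ℝ)+1) * Fc a b c r (u+1)
      = a * (if r = 0 then 0 else Fc a b c (r-1) u) + c * Fc a b c r u := by
  rw [Fc_symm a b c r (u+1), Fc_key a c b u r, Fc_symm a c b u r]
  by_cases h : r = 0 <;> simp [h, Fc_symm a c b u (r-1)]

lemma Fc_mul_r (a b c : ℝ) (r u : ℕ) :
    (r:ℝ) * Fc a b c r u
      = a * (if r = 0 ∨ u = 0 then 0 else Fc a b c (r-1) (u-1))
        + b * (if r = 0 then 0 else Fc a b c (r-1) u) := by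
  cases r with
  | zero => simp
  | succ s =>
      simp only [Nat.succ_ne_zero, false_or, if_neg (Nat.succ_ne_zero s), Nat.add_sub_cancel]
      push_cast
      exact Fc_key a b c s u

lemma Fc_mul_u (a b c : ℝ) (r u : ℕ) :
    (u:ℝ) * Fc a b c r u
      = a * (if r = 0 ∨ u = 0 then 0 else Fc a b c (r-1) (u-1))
        + c * (if u = 0 then 0 else Fc a b c r (u-1)) := by
  cases u with
  | zero => simp
  | succ s =>
      simp only [Nat.succ_ne_zero, or_false, if_neg (Nat.succ_ne_zero s), Nat.add_sub_cancel]
      push_cast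
      exact Fc_key' a b c r s

/-- Law of `(X+Y₁, Z, X+Y₂)` where `X, Y₁, Y₂, Z` are independent Poisson with
parameters `a, b, c, d`: coordinates `(r, l, u)`. -/
noncomputable def invDist (a b c d : ℝ) (x : ℕ × ℕ × ℕ) : ℝ :=
  (∑' k : ℕ, if k ≤ x.1 ∧ k ≤ x.2.2 then
      poissonP a k * poissonP b (x.1 - k) * poissonP c (x.2.2 - k) else 0)
    * poissonP d x.2.1

lemma invDist_eq (a b c d : ℝ) (x : ℕ × ℕ × ℕ) :
    invDist a b c d x = Fc a b c x.1 x.2.2 * poissonP d x.2.1 := by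
  rw [invDist, Fc]
  congr 1
  rw [tsum_eq_sum (s := Finset.range (min x.1 x.2.2 + 1))
      (fun k hk => by
        rw [if_neg]
        rintro ⟨h1, h2⟩
        exact hk (Finset.mem_range.mpr (by omega)))]
  exact Finset.sum_congr rfl fun k hk =>
    if_pos (by have := Finset.mem_range.mp hk; omega)

theorem stmt7 (lam μR μL μU : ℝ) (hlam : 0 < lam) (hμR : 0 < μR)
    (hμL : 0 < μL) (hμU : 0 < μU) (y : ℕ × ℕ × ℕ) :
    (if y.1 = 0 ∨ y.2.2 = 0 then 0 else
        μL * (y.2.1 + 1) * invDist (lam / (μR + μU)) (lam * μU / (μR * (μR + μU)))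
          (lam * μR / (μU * (μR + μU))) (lam / μL) (y.1 - 1, y.2.1 + 1, y.2.2 - 1))
    + μR * (y.1 + 1) * invDist (lam / (μR + μU)) (lam * μU / (μR * (μR + μU)))
          (lam * μR / (μU * (μR + μU))) (lam / μL) (y.1 + 1, y.2.1, y.2.2)
    + μU * (y.2.2 + 1) * invDist (lam / (μR + μU)) (lam * μU / (μR * (μR + μU)))
          (lam * μR / (μU * (μR + μU))) (lam / μL) (y.1, y.2.1, y.2.2 + 1)
    + (if y.2.1 = 0 then 0 else
        lam * invDist (lam / (μR + μU)) (lam * μU / (μR * (μR + μU)))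
          (lam * μR / (μU * (μR + μU))) (lam / μL) (y.1, y.2.1 - 1, y.2.2))
    = (μL * y.2.1 + μR * y.1 + μU * y.2.2 + lam)
        * invDist (lam / (μR + μU)) (lam * μU / (μR * (μR + μU)))
          (lam * μR / (μU * (μR + μU))) (lam / μL) y := by
  obtain ⟨r, l, u⟩ := y
  simp only [invDist_eq]
  set a := lam / (μR + μU) with ha
  set b := lam * μU / (μR * (μR + μU)) with hb
  set c := lam * μR / (μU * (μR + μU)) with hc
  set d := lam / μL with hd
  have hRU : μR + μU ≠ 0 := by positivity
  have h1 : μL * d = lam := by rw [hd]; field_simp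
  have h2 : μU * a = μR * b := by rw [ha, hb]; field_simp
  have h3 : μR * a = μU * c := by rw [ha, hc]; field_simp
  have h4 : μR * b + μU * c = lam := by rw [hb, hc]; field_simp; ring
  have h5 : μR * a + μU * a = lam := by rw [ha]; field_simp
  have E1 : (if r = 0 ∨ u = 0 then (0:ℝ) else
        μL * (↑l + 1) * (Fc a b c (r - 1) (u - 1) * poissonP d (l + 1)))
      = lam * ((if r = 0 ∨ u = 0 then (0:ℝ) else Fc a b c (r - 1) (u - 1)) * poissonP d l) := by
    split
    · simp
    · linear_combination (μL * Fc a b c (r - 1) (u - 1)) * pois_succ d l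
        + (Fc a b c (r - 1) (u - 1) * poissonP d l) * h1
  have E4 : (if l = 0 then (0:ℝ) else lam * (Fc a b c r u * poissonP d (l - 1)))
      = μL * ↑l * (Fc a b c r u * poissonP d l) := by
    cases l with
    | zero => simp
    | succ m =>
        rw [if_neg (Nat.succ_ne_zero m), Nat.add_sub_cancel]
        push_cast
        linear_combination (- μL * Fc a b c r u) * pois_succ d m
          - (Fc a b c r u * poissonP d m) * h1
  rw [E1, E4]
  linear_combination (μR * poissonP d l) * Fc_key a b c r u
    + (μU * poissonP d l) * Fc_key' a b c r u
    - (μR * poissonP d l) * Fc_mul_r a b c r u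
    - (μU * poissonP d l) * Fc_mul_u a b c r u
    + (Fc a b c r u * poissonP d l) * h4
    - ((if r = 0 ∨ u = 0 then (0:ℝ) else Fc a b c (r - 1) (u - 1)) * poissonP d l) * h5
    + ((if u = 0 then (0:ℝ) else Fc a b c r (u - 1)) * poissonP d l) * h3
    + ((if r = 0 then (0:ℝ) else Fc a b c (r - 1) u) * poissonP d l) * h2
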